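/- Let G be a finite simple connected graph, u ∈ V(G), and (T_G, u') the stable-path tree of G rooted at u (with respect to a fixed total order on V(G)). Then ℓ_G : V(T_G) → V(G) is a surjective graph homomorphism, i.e., it is surjective and maps adjacent vertices of T_G to adjacent vertices of G. -/

import Mathlib

/-- The set of vertices reachable from `w` by walks of `G` staying inside `B`
(the connected component of `w` in the induced subgraph `G[B]`). -/
def compIn {V : Type*} (G : SimpleGraph V) (B : Set V) (w : V) : Set V :=
  {y | ∃ p : G.Walk w y, ∀ z ∈ p.support, z ∈ B}

/-- Given the available vertex set `B`, the current vertex `x` and a chosen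
neighbour `w`, the vertex set of the connected component `G_i` of
`G[B] − ({x} ∪ {smaller neighbours of x})` containing `w`. -/
def nextSet {V : Type*} [LinearOrder V] (G : SimpleGraph V) (B : Set V) (x w : V) :
    Set V :=
  compIn G (B \ ({x} ∪ {z ∈ B | G.Adj x z ∧ z < w})) w

/-- `sptFrom G B x rest` says that `rest` is a valid continuation of a stable path
currently ending at `x`, with available vertex set `B`. -/
def sptFrom {V : Type*} [LinearOrder V] (G : SimpleGraph V) :
    Set V → V → List V → Prop
  | _, _, [] => True
  | B, x, w :: rest => G.Adj x w ∧ w ∈ B ∧ sptFrom G (nextSet G B x w) w rest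

/-- `p` is a stable path of `G` starting at `u`. -/
def StablePath {V : Type*} [LinearOrder V] (G : SimpleGraph V) (u : V)
    (p : List V) : Prop :=
  ∃ rest, p = u :: rest ∧ sptFrom G Set.univ u rest

/-- The vertex set of the stable-path tree `T_G` rooted at `u`: stable paths
starting at `u` (all of which have pairwise distinct entries). -/
def SPVert {V : Type*} [LinearOrder V] (G : SimpleGraph V) (u : V) :=
  {p : List V // p.Nodup ∧ StablePath G u p}

noncomputable instance {V : Type*} [Fintype V] [DecidableEq V] [LinearOrder V]
    (G : SimpleGraph V) (u : V) : Fintype (SPVert G u) :=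
  Fintype.ofInjective (fun p => (⟨p.1, p.2.1⟩ : {l : List V // l.Nodup}))
    (by rintro ⟨a, ha⟩ ⟨b, hb⟩ h; exact Subtype.ext (by simpa [Subtype.ext_iff] using h))

/-- The stable-path tree `T_G` of `G` rooted at `u`: a stable path is joined to
each of its one-step extensions. -/
def SPT {V : Type*} [LinearOrder V] (G : SimpleGraph V) (u : V) :
    SimpleGraph (SPVert G u) :=
  SimpleGraph.fromRel (fun p q => q.1.length = p.1.length + 1 ∧ p.1 <+: q.1)

/-- The root `u'` of the stable-path tree. -/
def SPTroot {V : Type*} [LinearOrder V] (G : SimpleGraph V) (u : V) : SPVert G u :=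
  ⟨[u], by simp, ⟨[], rfl, trivial⟩⟩

/-- The labeling map `ℓ_G : V(T_G) → V(G)` sending a stable path to its last vertex. -/
def SPTlabel {V : Type*} [LinearOrder V] {G : SimpleGraph V} {u : V}
    (p : SPVert G u) : V :=
  p.1.getLast (by obtain ⟨-, rest, h, -⟩ := p.2; simp [h])

set_option linter.unusedSectionVars false

section aux
variable {V : Type*} [LinearOrder V] {G : SimpleGraph V}

lemma compIn_subset {B : Set V} {w : V} : compIn G B w ⊆ B := by
  rintro y ⟨p, hp⟩; exact hp y p.end_mem_support

lemma self_mem_compIn {B : Set V} {w : V} (hw : w ∈ B) : w ∈ compIn G B w :=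
  ⟨SimpleGraph.Walk.nil, by simpa⟩

lemma mem_compIn_of_support {C : Set V} {w y : V} (p : G.Walk w y)
    (hp : ∀ z ∈ p.support, z ∈ C) : ∀ z ∈ p.support, z ∈ compIn G C w :=
  fun z hz => ⟨p.takeUntil z hz, fun a ha => hp a (p.support_takeUntil_subset hz ha)⟩

lemma nextSet_subset {B : Set V} {x w : V} : nextSet G B x w ⊆ B \ {x} := by
  intro y hy
  have h := compIn_subset hy
  exact ⟨h.1, fun hx => h.2 (Or.inl hx)⟩

lemma sptFrom_mem : ∀ {rest : List V} {B : Set V} {x : V}, sptFrom G B x rest →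
    ∀ z ∈ rest, z ∈ B ∧ z ≠ x
  | [], _, _, _ => by simp
  | w :: r, B, x, ⟨hadj, hwB, hr⟩ => by
    intro z hz
    rcases List.mem_cons.1 hz with rfl | hz
    · exact ⟨hwB, fun h => G.loopless.irrefl x (h ▸ hadj)⟩
    · have h1 := (sptFrom_mem hr z hz).1
      have h2 := nextSet_subset h1
      exact ⟨h2.1, fun h => h2.2 (by simp [h])⟩

lemma sptFrom_nodup : ∀ {rest : List V} {B : Set V} {x : V}, sptFrom G B x rest →
    (x :: rest).Nodup
  | [], _, _, _ => by simp
  | w :: r, B, x, h => by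
    obtain ⟨hadj, hwB, hr⟩ := h
    have hn := sptFrom_nodup hr
    refine List.nodup_cons.2 ⟨?_, hn⟩
    intro hx
    rcases List.mem_cons.1 hx with rfl | hx
    · exact G.loopless.irrefl x hadj
    · exact (nextSet_subset (sptFrom_mem hr x hx).1).2 rfl

lemma sptFrom_lastAdj : ∀ {r : List V} {B : Set V} {x w : V},
    sptFrom G B x (r ++ [w]) → G.Adj ((x :: r).getLast (by simp)) w
  | [], _, _, _, h => by simpa using h.1
  | a :: r, B, x, w, h => by
    obtain ⟨hadj, haB, hr⟩ := h
    have := sptFrom_lastAdj (r := r) hr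
    rwa [List.getLast_cons (by simp)]

lemma reach [Fintype V] : ∀ (n : ℕ) (B : Set V) (x : V), B.ncard ≤ n → x ∈ B →
    ∀ y ∈ compIn G B x, ∃ rest, sptFrom G B x rest ∧ (x :: rest).getLast (by simp) = y
  | 0, B, x, hB, hx, y, hy => by
    have : B.ncard = 0 := Nat.le_zero.1 hB
    rw [Set.ncard_eq_zero (Set.toFinite B)] at this
    simp [this] at hx
  | n + 1, B, x, hB, hx, y, hy => by
    rcases eq_or_ne y x with rfl | hyx
    · exact ⟨[], trivial, rfl⟩
    obtain ⟨p, hp⟩ := hy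
    -- replace by a path
    have hps : ∀ z ∈ p.bypass.support, z ∈ B := fun z hz => hp z (p.support_bypass_subset hz)
    have hnd := p.bypass_isPath.support_nodup
    -- the set of candidate neighbours
    set S : Set V := {w | G.Adj x w ∧ w ∈ B ∧
        ∃ q : G.Walk w y, ∀ z ∈ q.support, z ∈ B \ {x}} with hS
    have hSne : S.Nonempty := by
      cases hq : p.bypass with
      | nil => exact absurd rfl hyx
      | cons h q =>
        refine ⟨_, h, hps _ (by rw [hq]; simp), q, fun z hz => ?_⟩
        have hzB : z ∈ B := hps z (by rw [hq]; exact List.mem_cons_of_mem _ hz)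
        refine ⟨hzB, fun hzx => ?_⟩
        have : x ∉ q.support := by
          have := hnd; rw [hq, SimpleGraph.Walk.support_cons] at this
          exact (List.nodup_cons.1 this).1
        exact this (Set.eq_of_mem_singleton hzx ▸ hz)
    obtain ⟨w₀, hw₀S, hw₀min⟩ := Set.exists_min_image S id (Set.toFinite S) hSne
    obtain ⟨hadj₀, hw₀B, q₀, hq₀⟩ := hw₀S
    -- make q₀ a path and show it avoids smaller neighbours of x
    have hq₀s : ∀ z ∈ q₀.bypass.support, z ∈ B \ {x} :=
      fun z hz => hq₀ z (q₀.support_bypass_subset hz)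
    have havoid : ∀ z ∈ q₀.bypass.support, z ∈ B \ ({x} ∪ {z | z ∈ B ∧ G.Adj x z ∧ z < w₀}) := by
      intro z hz
      refine ⟨(hq₀s z hz).1, ?_⟩
      rintro (hzx | ⟨hzB, hzadj, hzlt⟩)
      · exact (hq₀s z hz).2 hzx
      · -- tail from z gives z ∈ S, contradicting minimality
        have hzS : z ∈ S := ⟨hzadj, hzB, q₀.bypass.dropUntil z hz,
          fun a ha => hq₀s a ((q₀.bypass.support_dropUntil_subset hz) ha)⟩
        exact absurd (hw₀min z hzS) (not_le.2 hzlt)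
    have hyN : y ∈ compIn G (nextSet G B x w₀) w₀ :=
      ⟨q₀.bypass, mem_compIn_of_support q₀.bypass havoid⟩
    have hwN : w₀ ∈ nextSet G B x w₀ :=
      self_mem_compIn (havoid w₀ q₀.bypass.start_mem_support)
    have hcard : (nextSet G B x w₀).ncard ≤ n := by
      have h1 : (nextSet G B x w₀).ncard ≤ (B \ {x}).ncard :=
        Set.ncard_le_ncard nextSet_subset (Set.toFinite _)
      have h2 : (B \ {x}).ncard < B.ncard :=
        Set.ncard_diff_singleton_lt_of_mem hx (Set.toFinite B)
      omega
    obtain ⟨rest', hsp, hlast⟩ := reach n (nextSet G B x w₀) w₀ hcard hwN y hyN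
    refine ⟨w₀ :: rest', ⟨hadj₀, hw₀B, hsp⟩, ?_⟩
    rwa [List.getLast_cons (by simp)]
end aux

section main
variable {V : Type*} [LinearOrder V] {G : SimpleGraph V}

lemma getLast_eq_of_getLast? {α : Type*} {l : List α} (h : l ≠ []) {w : α}
    (hw : l.getLast? = some w) : l.getLast h = w := by
  rw [List.getLast?_eq_getLast h] at hw
  exact Option.some_inj.1 hw

lemma key_adj {u : V} (p q : SPVert G u) (hlen : q.1.length = p.1.length + 1)
    (hpre : p.1 <+: q.1) : G.Adj (SPTlabel p) (SPTlabel q) := by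
  obtain ⟨t, ht⟩ := hpre
  have htlen : t.length = 1 := by
    have := congrArg List.length ht
    simp at this; omega
  obtain ⟨w, rfl⟩ := List.length_eq_one_iff.1 htlen
  obtain ⟨restp, hp, hsp_p⟩ := p.2.2
  obtain ⟨restq, hq, hsp_q⟩ := q.2.2
  have hrq : restq = restp ++ [w] := by
    have : (u :: restq) = (u :: restp) ++ [w] := by rw [← hq, ← hp, ht]
    simpa using this
  have hlabp : SPTlabel p = (u :: restp).getLast (by simp) := by
    apply getLast_eq_of_getLast?
    rw [hp, List.getLast?_eq_getLast (l := u :: restp) (by simp)]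
  have hlabq : SPTlabel q = w := by
    apply getLast_eq_of_getLast?
    rw [hq, hrq, show u :: (restp ++ [w]) = (u :: restp) ++ [w] from rfl,
      List.getLast?_concat]
  rw [hlabp, hlabq]
  exact sptFrom_lastAdj (hrq ▸ hsp_q)

end main

/-- The labeling  of the stable-path tree is a surjective graph homomorphism. -/
theorem stmt_17 {V : Type*} [Fintype V] [LinearOrder V] (G : SimpleGraph V)
    (hG : G.Connected) (u : V) :
    Function.Surjective (SPTlabel : SPVert G u → V) ∧
    ∀ p q : SPVert G u, (SPT G u).Adj p q → G.Adj (SPTlabel p) (SPTlabel q) := by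
  constructor
  · intro y
    obtain ⟨p⟩ := (hG.preconnected u y)
    have hy : y ∈ compIn G (Set.univ : Set V) u := ⟨p, fun z _ => trivial⟩
    obtain ⟨rest, hsp, hlast⟩ := reach (G := G) (Fintype.card V) Set.univ u
      (by simp [Set.ncard_univ]) trivial y hy
    exact ⟨⟨u :: rest, sptFrom_nodup hsp, rest, rfl, hsp⟩, hlast⟩
  · intro p q hpq
    rw [SPT, SimpleGraph.fromRel_adj] at hpq
    obtain ⟨-, ⟨hlen, hpre⟩ | ⟨hlen, hpre⟩⟩ := hpq
    · exact key_adj p q hlen hpre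
    · exact (key_adj q p hlen hpre).symm
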